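/- Let q: ℝ → ℝ be positive and differentiable, and let u = -(1/q)·dq/dθ. Then u satisfies the Riccati equation du/dθ = (α-1)u² (for some constant α ≠ 0) if and only if there exist constants a, b such that q(θ) as a function of arc length s (with ds/dθ = q) satisfies q^α = a·s + b in the case α ≠ 0; in particular for α = 1, u is constant and q(θ) = q(0)·exp(-u·θ), a logarithmic spiral. -/

import Mathlib

/-- The Riccati (Bernoulli) equation for the similarity curvature `u = -q'/q`
is equivalent to the log-aesthetic condition `q^α = a·s + b` in terms of
arc length `s(θ) = ∫₀^θ q`; in particular for `α = 1`, `u` is constant and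
`q` is the radius function of a logarithmic spiral. -/
theorem lac_riccati_iff_arclength
    (α : ℝ) (hα : α ≠ 0)
    (q u : ℝ → ℝ)
    (hqpos : ∀ θ, 0 < q θ)
    (hqdiff : Differentiable ℝ q)
    (hu : ∀ θ, u θ = -(deriv q θ) / q θ) :
    ((∀ θ, HasDerivAt u ((α - 1) * (u θ) ^ 2) θ)
      ↔ ∃ a b : ℝ, ∀ θ, q θ ^ α = a * (∫ τ in (0:ℝ)..θ, q τ) + b)
    ∧ (α = 1 → (∀ θ, HasDerivAt u ((α - 1) * (u θ) ^ 2) θ) →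
        ∃ u₀ : ℝ, (∀ θ, u θ = u₀) ∧ ∀ θ, q θ = q 0 * Real.exp (-u₀ * θ)) := by
  have hq0 : ∀ θ, q θ ≠ 0 := fun θ => (hqpos θ).ne'
  have hq' : ∀ θ, deriv q θ = -(u θ) * q θ := by
    intro θ; rw [hu θ]; field_simp
    rw [mul_div_cancel_right₀ _ (hq0 θ)]
  have hcont : Continuous q := hqdiff.continuous
  have hs : ∀ θ, HasDerivAt (fun t => ∫ τ in (0:ℝ)..t, q τ) (q θ) θ := fun θ =>
    (hcont.integral_hasStrictDerivAt 0 θ).hasDerivAt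
  constructor
  · constructor
    · -- forward
      intro hR
      set h : ℝ → ℝ := fun θ => u θ * q θ ^ (α - 1) with hh
      have hhd : ∀ θ, HasDerivAt h 0 θ := by
        intro θ
        have h1 : HasDerivAt (fun t => q t ^ (α - 1))
            (deriv q θ * (α - 1) * q θ ^ (α - 1 - 1)) θ :=
          (hqdiff θ).hasDerivAt.rpow_const (Or.inl (hq0 θ))
        have h2 := (hR θ).mul h1
        convert h2 using 1
        rfl
        rfl
        rfl
        have e1 : q θ ^ (α - 1 - 1) * q θ = q θ ^ (α - 1) := by
          rw [Real.rpow_sub_one (hq0 θ)]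
          exact div_mul_cancel₀ _ (hq0 θ)
        rw [hq' θ]
        linarith [mul_self_nonneg (u θ),
          congrArg (fun x => (α - 1) * u θ ^ 2 * x) e1.symm]
      have hconst : ∀ θ, h θ = h 0 := by
        intro θ
        exact is_const_of_deriv_eq_zero (fun x => (hhd x).differentiableAt)
          (fun x => (hhd x).deriv) θ 0
      refine ⟨-α * h 0, q 0 ^ α, fun θ => ?_⟩
      set F : ℝ → ℝ := fun t => q t ^ α - (-α * h 0) * (∫ τ in (0:ℝ)..t, q τ) with hF
      have hFd : ∀ t, HasDerivAt F 0 t := by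
        intro t
        have h1 : HasDerivAt (fun y => q y ^ α) (deriv q t * α * q t ^ (α - 1)) t :=
          (hqdiff t).hasDerivAt.rpow_const (Or.inl (hq0 t))
        have h2 := h1.sub ((hs t).const_mul (-α * h 0))
        convert h2 using 1
        rfl
        rfl
        rfl
        have hc := hconst t
        simp only [hh] at hc ⊢
        rw [hq' t, ← hc]
        ring
      have hFc : F θ = F 0 := is_const_of_deriv_eq_zero
        (fun x => (hFd x).differentiableAt) (fun x => (hFd x).deriv) θ 0
      simp only [hF, intervalIntegral.integral_same, mul_zero, sub_zero] at hFc
      linarith [hFc]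
    · -- backward
      rintro ⟨a, b, hab⟩ θ
      have hq'' : ∀ t, deriv q t * α * q t ^ (α - 1) = a * q t := by
        intro t
        have h1 : HasDerivAt (fun y => q y ^ α) (deriv q t * α * q t ^ (α - 1)) t :=
          (hqdiff t).hasDerivAt.rpow_const (Or.inl (hq0 t))
        have h2 : HasDerivAt (fun y => a * (∫ τ in (0:ℝ)..y, q τ) + b) (a * q t) t :=
          ((hs t).const_mul a).add_const b
        have heq : (fun y => q y ^ α) = fun y => a * (∫ τ in (0:ℝ)..y, q τ) + b :=
          funext hab
        rw [heq] at h1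
        exact h1.unique h2
      have hinv : ∀ t, q t ^ (α - 1) * q t ^ (1 - α) = 1 := by
        intro t
        rw [← Real.rpow_add (hqpos t)]
        norm_num
      have hderiv : ∀ t, deriv q t = (a / α) * q t * q t ^ (1 - α) := by
        intro t
        have k2 : deriv q t * α = a * q t * q t ^ (1 - α) := by
          linear_combination (q t ^ (1 - α)) * hq'' t - (deriv q t * α) * hinv t
        field_simp
        linear_combination k2
      have huv : ∀ t, u t = -(a / α) * q t ^ (1 - α) := by
        intro t
        rw [hu t, hderiv t]
        field_simp [hq0 t]
      have hufun : u = fun t => -(a / α) * q t ^ (1 - α) := funext huv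
      rw [hufun]
      have h1 : HasDerivAt (fun t => q t ^ (1 - α))
          (deriv q θ * (1 - α) * q θ ^ (1 - α - 1)) θ :=
        (hqdiff θ).hasDerivAt.rpow_const (Or.inl (hq0 θ))
      have h2 := h1.const_mul (-(a / α))
      convert h2 using 1
      rfl
      rfl
      rw [hderiv θ]
      have e1 : q θ ^ (1 - α - 1) * q θ = q θ ^ (1 - α) := by
        rw [Real.rpow_sub_one (hq0 θ)]
        exact div_mul_cancel₀ _ (hq0 θ)
      linear_combination (-(α - 1) * (a / α) ^ 2 * q θ ^ (1 - α)) * e1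
  · -- α = 1 case
    intro hα1 hR
    have hud : ∀ t, HasDerivAt u 0 t := by
      intro t; have := hR t; rw [hα1] at this; simpa using this
    have huc : ∀ t, u t = u 0 := fun t =>
      is_const_of_deriv_eq_zero (fun x => (hud x).differentiableAt)
        (fun x => (hud x).deriv) t 0
    refine ⟨u 0, huc, ?_⟩
    intro θ
    set g : ℝ → ℝ := fun t => q t * Real.exp (u 0 * t) with hg
    have hgd : ∀ t, HasDerivAt g 0 t := by
      intro t
      have h1 : HasDerivAt (fun x : ℝ => Real.exp (u 0 * x))
          (Real.exp (u 0 * t) * u 0) t := by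
        have hlin : HasDerivAt (fun x : ℝ => u 0 * x) (u 0) t := by
          simpa using (hasDerivAt_id t).const_mul (u 0)
        exact (Real.hasDerivAt_exp (u 0 * t)).comp t hlin
      have h2 := (hqdiff t).hasDerivAt.mul h1
      convert h2 using 1
      rfl
      rfl
      rfl
      rw [hq' t, huc t]
      ring
    have hgc : g θ = g 0 := is_const_of_deriv_eq_zero
      (fun x => (hgd x).differentiableAt) (fun x => (hgd x).deriv) θ 0
    simp only [hg, mul_zero, Real.exp_zero, mul_one] at hgc
    have hexp : Real.exp (u 0 * θ) ≠ 0 := (Real.exp_pos _).ne'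
    rw [show -(u 0) * θ = -(u 0 * θ) by ring, Real.exp_neg]
    field_simp
    linarith [hgc]
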